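/- The set of 4×4 rate matrices commuting with the 𝒢-action, namely {Q ∈ 𝔏_GM : K_σ Q = Q K_σ for all σ ∈ 𝒢}, equals the 2-dimensional complex linear span of B^id₁ = P_(12)(34) and B^id₂ = P_(13)(24) + P_(14)(23). (This is the 𝒢-equivariant model, i.e. the Kimura 2-parameter model.) -/

import Mathlib

open Matrix

noncomputable section

/-- The elementary rate matrix `L_ij`: entry 1 at `(i,j)`, entry −1 at `(j,j)`, 0 elsewhere. -/
def Lmat (i j : Fin 4) : Matrix (Fin 4) (Fin 4) ℂ :=
  Matrix.single i j 1 - Matrix.single j j 1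

/-- `𝔏_GM`: the 4×4 complex matrices each of whose columns sums to zero. -/
def LGMset : Set (Matrix (Fin 4) (Fin 4) ℂ) :=
  {Q | ∀ j, ∑ i, Q i j = 0}

/-- The permutation matrix `K_σ`, with entry 1 in position `(σ j, j)` for each `j`. -/
def Kmat (σ : Equiv.Perm (Fin 4)) : Matrix (Fin 4) (Fin 4) ℂ :=
  Matrix.of fun i j => if i = σ j then 1 else 0

/-- The permutation vector `P_σ := K_σ − I`. -/
def Pmat (σ : Equiv.Perm (Fin 4)) : Matrix (Fin 4) (Fin 4) ℂ :=
  Kmat σ - 1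

/-- The 4-cycle (1324) (on `{1,2,3,4}`, i.e. `0 ↦ 2 ↦ 1 ↦ 3 ↦ 0` on `Fin 4`). -/
def c1324 : Equiv.Perm (Fin 4) := Equiv.swap 0 3 * Equiv.swap 0 1 * Equiv.swap 0 2

/-- The 4-cycle (1423) (on `{1,2,3,4}`, i.e. `0 ↦ 3 ↦ 1 ↦ 2 ↦ 0` on `Fin 4`). -/
def c1423 : Equiv.Perm (Fin 4) := Equiv.swap 0 2 * Equiv.swap 0 1 * Equiv.swap 0 3

/-- The group 𝒢 = {e, (12), (34), (12)(34), (13)(24), (14)(23), (1324), (1423)},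
presented as a list of its eight elements. -/
def Glist : List (Equiv.Perm (Fin 4)) :=
  [1, Equiv.swap 0 1, Equiv.swap 2 3, Equiv.swap 0 1 * Equiv.swap 2 3,
   Equiv.swap 0 2 * Equiv.swap 1 3, Equiv.swap 0 3 * Equiv.swap 1 2, c1324, c1423]

def Bid1 : Matrix (Fin 4) (Fin 4) ℂ := Pmat (Equiv.swap 0 1 * Equiv.swap 2 3)
def Bid2 : Matrix (Fin 4) (Fin 4) ℂ :=
  Pmat (Equiv.swap 0 2 * Equiv.swap 1 3) + Pmat (Equiv.swap 0 3 * Equiv.swap 1 2)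

/-! ### Auxiliary lemmas -/

lemma Kmat_congr (σ τ : Equiv.Perm (Fin 4)) (h : ∀ j, σ j = τ j) : Kmat σ = Kmat τ := by
  ext i j; simp [Kmat, h]

lemma Kmat_perm (σ : Equiv.Perm (Fin 4)) (v : Fin 4 → Fin 4) (h : ∀ j, σ j = v j) :
    Kmat σ = Matrix.of fun i j => if i = v j then 1 else 0 := by
  ext i j; simp [Kmat, h]

lemma Kmul (σ τ : Equiv.Perm (Fin 4)) : Kmat (σ * τ) = Kmat σ * Kmat τ := by
  ext i j
  simp [Kmat, Matrix.mul_apply, Finset.sum_ite_eq, ite_and]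
  congr

lemma comm_entry (σ : Equiv.Perm (Fin 4)) (Q : Matrix (Fin 4) (Fin 4) ℂ)
    (h : Kmat σ * Q = Q * Kmat σ) (i j : Fin 4) : Q (σ i) (σ j) = Q i j := by
  have h1 := congrFun (congrFun h (σ i)) j
  have h2 : Q i j = Q (σ i) (σ j) := by
    simpa [Kmat, Matrix.mul_apply, σ.injective.eq_iff] using h1
  exact h2.symm

lemma commP (σ τ : Equiv.Perm (Fin 4)) (h : ∀ j, (σ * τ) j = (τ * σ) j) :
    Kmat σ * Pmat τ = Pmat τ * Kmat σ := by
  rw [Pmat, mul_sub, sub_mul, mul_one, one_mul, ← Kmul, ← Kmul, Kmat_congr _ _ h]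

lemma commB2fix (σ a b : Equiv.Perm (Fin 4)) (h1 : ∀ j, (σ * a) j = (a * σ) j)
    (h2 : ∀ j, (σ * b) j = (b * σ) j) :
    Kmat σ * (Pmat a + Pmat b) = (Pmat a + Pmat b) * Kmat σ := by
  rw [mul_add, add_mul, commP σ a h1, commP σ b h2]

lemma commB2swap (σ a b : Equiv.Perm (Fin 4)) (h1 : ∀ j, (σ * a) j = (b * σ) j)
    (h2 : ∀ j, (σ * b) j = (a * σ) j) :
    Kmat σ * (Pmat a + Pmat b) = (Pmat a + Pmat b) * Kmat σ := by
  have e1 : Kmat σ * Kmat a = Kmat b * Kmat σ := by rw [← Kmul, ← Kmul, Kmat_congr _ _ h1]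
  have e2 : Kmat σ * Kmat b = Kmat a * Kmat σ := by rw [← Kmul, ← Kmul, Kmat_congr _ _ h2]
  simp only [Pmat, mul_add, add_mul, mul_sub, sub_mul, mul_one, one_mul, e1, e2]
  abel

lemma Bid1_eq : Bid1 = !![-1,1,0,0;1,-1,0,0;0,0,-1,1;0,0,1,-1] := by
  rw [Bid1, Pmat, Kmat_perm _ ![1,0,3,2] (by decide)]
  ext i j; fin_cases i <;> fin_cases j <;>
    simp [Matrix.vecHead, Matrix.vecTail, Matrix.one_apply]

lemma Bid2_eq : Bid2 = !![-2,0,1,1;0,-2,1,1;1,1,-2,0;1,1,0,-2] := by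
  rw [Bid2, Pmat, Pmat, Kmat_perm (Equiv.swap 0 2 * Equiv.swap 1 3) ![2,3,0,1] (by decide),
    Kmat_perm (Equiv.swap 0 3 * Equiv.swap 1 2) ![3,2,1,0] (by decide)]
  ext i j; fin_cases i <;> fin_cases j <;>
    simp [Matrix.vecHead, Matrix.vecTail, Matrix.one_apply] <;> norm_num

lemma eta_fin_four (A : Matrix (Fin 4) (Fin 4) ℂ) :
    A = !![A 0 0, A 0 1, A 0 2, A 0 3;
           A 1 0, A 1 1, A 1 2, A 1 3;
           A 2 0, A 2 1, A 2 2, A 2 3;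
           A 3 0, A 3 1, A 3 2, A 3 3] := by
  ext i j
  fin_cases i <;> fin_cases j <;> rfl

lemma comm1 : ∀ σ ∈ Glist, Kmat σ * Bid1 = Bid1 * Kmat σ := by
  intro σ hσ
  rw [Bid1]
  fin_cases hσ <;> exact commP _ _ (by decide)

lemma comm2 : ∀ σ ∈ Glist, Kmat σ * Bid2 = Bid2 * Kmat σ := by
  intro σ hσ
  rw [Bid2]
  fin_cases hσ
  · exact commB2fix _ _ _ (by decide) (by decide)
  · exact commB2swap _ _ _ (by decide) (by decide)
  · exact commB2swap _ _ _ (by decide) (by decide)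
  · exact commB2fix _ _ _ (by decide) (by decide)
  · exact commB2fix _ _ _ (by decide) (by decide)
  · exact commB2fix _ _ _ (by decide) (by decide)
  · exact commB2swap _ _ _ (by decide) (by decide)
  · exact commB2swap _ _ _ (by decide) (by decide)

theorem equivariant_model_is_kimura_two_parameter :
    {Q : Matrix (Fin 4) (Fin 4) ℂ | Q ∈ LGMset ∧ ∀ σ ∈ Glist, Kmat σ * Q = Q * Kmat σ} =
      (Submodule.span ℂ {Bid1, Bid2} : Set (Matrix (Fin 4) (Fin 4) ℂ)) ∧
    Module.finrank ℂ ↥(Submodule.span ℂ ({Bid1, Bid2} : Set (Matrix (Fin 4) (Fin 4) ℂ))) = 2 := by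
  constructor
  · ext Q
    simp only [Set.mem_setOf_eq, SetLike.mem_coe]
    constructor
    · rintro ⟨hL, hK⟩
      have hs := comm_entry _ _ (hK (Equiv.swap 0 1) (by simp [Glist]))
      have hc := comm_entry _ _ (hK c1324 (by simp [Glist]))
      have f1 : Q 0 1 = Q 1 0 := by simpa using hs 1 0
      have f2 : Q 3 2 = Q 1 0 := by simpa [c1324, Equiv.swap_apply_def] using hc 1 0
      have f3 : Q 2 3 = Q 0 1 := by simpa [c1324, Equiv.swap_apply_def] using hc 0 1
      have g1 : Q 1 2 = Q 2 0 := by simpa [c1324, Equiv.swap_apply_def] using hc 2 0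
      have g2 : Q 3 1 = Q 1 2 := by simpa [c1324, Equiv.swap_apply_def] using hc 1 2
      have g3 : Q 0 3 = Q 3 1 := by simpa [c1324, Equiv.swap_apply_def] using hc 3 1
      have g4 : Q 2 1 = Q 2 0 := by simpa [Equiv.swap_apply_def] using hs 2 0
      have g5 : Q 1 3 = Q 2 1 := by simpa [c1324, Equiv.swap_apply_def] using hc 2 1
      have g6 : Q 3 0 = Q 1 3 := by simpa [c1324, Equiv.swap_apply_def] using hc 1 3
      have g7 : Q 0 2 = Q 3 0 := by simpa [c1324, Equiv.swap_apply_def] using hc 3 0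
      have d1 : Q 1 1 = Q 0 0 := by simpa using hs 0 0
      have d2 : Q 2 2 = Q 0 0 := by simpa [c1324, Equiv.swap_apply_def] using hc 0 0
      have d3 : Q 3 3 = Q 1 1 := by simpa [c1324, Equiv.swap_apply_def] using hc 1 1
      have sum0 : Q 0 0 + Q 1 0 + Q 2 0 + Q 3 0 = 0 := by
        have := hL 0; rwa [Fin.sum_univ_four] at this
      rw [Submodule.mem_span_pair]
      refine ⟨Q 1 0, Q 2 0, ?_⟩
      have R : Q 1 0 • Bid1 + Q 2 0 • Bid2 =
          !![-(Q 1 0) - 2*Q 2 0, Q 1 0, Q 2 0, Q 2 0;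
             Q 1 0, -(Q 1 0) - 2*Q 2 0, Q 2 0, Q 2 0;
             Q 2 0, Q 2 0, -(Q 1 0) - 2*Q 2 0, Q 1 0;
             Q 2 0, Q 2 0, Q 1 0, -(Q 1 0) - 2*Q 2 0] := by
        rw [Bid1_eq, Bid2_eq]
        ext i j
        fin_cases i <;> fin_cases j <;>
          simp [Matrix.vecHead, Matrix.vecTail] <;> ring
      rw [R]
      conv_rhs => rw [eta_fin_four Q]
      ext i j
      fin_cases i <;> fin_cases j <;>
        simp [Matrix.vecHead, Matrix.vecTail] <;>
      first
        | ring1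
        | linear_combination -f1
        | linear_combination -f2
        | linear_combination -f3 - f1
        | linear_combination -g1
        | linear_combination -g4
        | linear_combination -g5 - g4
        | linear_combination -g6 - g5 - g4
        | linear_combination -g7 - g6 - g5 - g4
        | linear_combination -g2 - g1
        | linear_combination -g3 - g2 - g1
        | linear_combination sum0 - g4 - g5 - g6
        | linear_combination d1 + sum0 - g4 - g5 - g6
        | linear_combination d2 + sum0 - g4 - g5 - g6
        | linear_combination d3 + d1 + sum0 - g4 - g5 - g6
        | linear_combination -sum0 + g4 + g5 + g6
        | linear_combination -d1 - sum0 + g4 + g5 + g6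
        | linear_combination -d2 - sum0 + g4 + g5 + g6
        | linear_combination -d3 - d1 - sum0 + g4 + g5 + g6
    · intro hQ
      obtain ⟨a, b, rfl⟩ := Submodule.mem_span_pair.mp hQ
      refine ⟨?_, ?_⟩
      · intro j
        fin_cases j <;>
          simp [Bid1_eq, Bid2_eq, Fin.sum_univ_four, Matrix.vecHead, Matrix.vecTail] <;> ring
      · intro σ hσ
        rw [mul_add, add_mul, mul_smul_comm, smul_mul_assoc, mul_smul_comm, smul_mul_assoc,
          comm1 σ hσ, comm2 σ hσ]
  · have hli : LinearIndependent ℂ ![Bid1, Bid2] := by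
      rw [linearIndependent_fin2]
      constructor
      · intro h
        have h1 := congrFun (congrFun h 2) 0
        rw [Bid2_eq] at h1
        simp at h1
      · intro a h
        have h1 := congrFun (congrFun h 1) 0
        rw [Bid1_eq, Bid2_eq] at h1
        simp at h1
    have hrange : Set.range ![Bid1, Bid2] = {Bid1, Bid2} := by
      ext x
      simp only [Set.mem_range, Fin.exists_fin_two, Matrix.cons_val_zero,
        Matrix.cons_val_one, Matrix.head_cons, Set.mem_insert_iff, Set.mem_singleton_iff]
      constructor
      · rintro (rfl | rfl) <;> simp
      · rintro (rfl | rfl) <;> simp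
    rw [← hrange, finrank_span_eq_card hli, Fintype.card_fin]
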